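/- arXiv:1705.04933 — 2 statements merged into one kernel-verified Lean document; each statement's English description precedes it below -/
import Mathlib

section
/- Let E/F be a finite Galois field extension with Galois group Γ, and let W be an E-vector space equipped with a semilinear Γ-action (i.e., σ(e·w) = σ(e)·σ(w)). Then the natural E-linear map E ⊗_F W^Γ → W, e ⊗ w ↦ e·w, is an isomorphism (Galois descent for vector spaces). -/
open scoped TensorProduct

/-- The multiplicative group structure on `A ≃+ A` that the older Mathlib provided
(via `AddAut A`): `g * h = h.trans g`, `1 = refl`, `g⁻¹ = g.symm`. -/
instance addEquivSelfMulGroup (A : Type*) [Add A] : Group (A ≃+ A) where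
  mul g h := AddEquiv.trans h g
  one := AddEquiv.refl _
  inv := AddEquiv.symm
  mul_assoc _ _ _ := rfl
  one_mul _ := rfl
  mul_one _ := rfl
  inv_mul_cancel := AddEquiv.self_trans_symm

/-- Galois descent for vector spaces: let `E/F` be a finite Galois extension with
Galois group `Γ = E ≃ₐ[F] E`, and `W` an `E`-vector space with a semilinear
`Γ`-action `ρ` (`ρ σ (e • w) = σ e • ρ σ w`). If `S` is the `F`-subspace of
`Γ`-fixed points and `L : E ⊗[F] S → W` is the natural map `e ⊗ w ↦ e • w`,
then `L` is an isomorphism. -/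
theorem galois_descent_vector_spaces
    (F E : Type*) [Field F] [Field E] [Algebra F E]
    [FiniteDimensional F E] [IsGalois F E]
    (W : Type*) [AddCommGroup W] [Module E W] [Module F W] [IsScalarTower F E W]
    (ρ : (E ≃ₐ[F] E) →* (W ≃+ W))
    (hρ : ∀ (σ : E ≃ₐ[F] E) (e : E) (w : W), ρ σ (e • w) = σ e • ρ σ w)
    (S : Submodule F W) (hS : ∀ w : W, w ∈ S ↔ ∀ σ : E ≃ₐ[F] E, ρ σ w = w)
    (L : E ⊗[F] S →ₗ[F] W)
    (hL : ∀ (e : E) (w : S), L (e ⊗ₜ[F] w) = e • (w : W)) :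
    Function.Bijective L := by
  classical
  set n := Module.finrank F E with hn
  let b : Module.Basis (Fin n) F E := Module.finBasis F E
  have hnd := traceForm_nondegenerate F E
  let a : Module.Basis (Fin n) F E := (Algebra.traceForm F E).dualBasis hnd b
  have hcard : Fintype.card (Fin n) = Fintype.card (E ≃ₐ[F] E) := by
    simp [← IsGalois.card_aut_eq_finrank, hn, Nat.card_eq_fintype_card]
  -- trace duality: ∑ τ, τ (a i * b j) = δ_{ij}
  have hdual : ∀ i j, ∑ τ : E ≃ₐ[F] E, τ (a i * b j) = if i = j then (1 : E) else 0 := by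
    intro i j
    rw [← trace_eq_sum_automorphisms]
    have h := (Algebra.traceForm F E).apply_dualBasis_left hnd b i j
    rw [Algebra.traceForm_apply] at h
    rw [h]
    by_cases hij : i = j <;> simp [hij, eq_comm]
  -- key fact: ∑ j, a j * σ (b j) = δ_{σ,1}
  have key : ∀ σ : E ≃ₐ[F] E, ∑ j, a j * σ (b j) = if σ = 1 then (1 : E) else 0 := by
    let P : Matrix (Fin n) (E ≃ₐ[F] E) E := fun i τ => τ (a i)
    let Q : Matrix (E ≃ₐ[F] E) (Fin n) E := fun σ j => σ (b j)
    have hPQ : P * Q = 1 := by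
      ext i j
      rw [Matrix.mul_apply]
      simp only [Matrix.mul_apply, P, Q, Matrix.one_apply, ← map_mul]
      exact hdual i j
    have hQP : Q * P = 1 :=
      (Matrix.mul_eq_one_comm_of_equiv (Fintype.equivOfCardEq hcard)).mp hPQ
    intro σ
    have := congrFun (congrFun hQP σ) 1
    simp only [Matrix.mul_apply, Q, P, Matrix.one_apply, AlgEquiv.one_apply] at this
    rw [← this]
    exact Finset.sum_congr rfl fun j _ => mul_comm _ _
  -- dual expansion: ∑ j, trace (b j * e) • a j = e
  have hexp : ∀ e : E, ∑ j, (Algebra.trace F E (b j * e)) • a j = e := by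
    intro e
    have : ∀ j, (Algebra.trace F E (b j * e)) • a j
        = ∑ τ : E ≃ₐ[F] E, (a j * τ (b j)) * τ e := by
      intro j
      rw [← algebraMap_smul E (Algebra.trace F E (b j * e)) (a j), smul_eq_mul,
        trace_eq_sum_automorphisms, Finset.sum_mul]
      exact Finset.sum_congr rfl fun τ _ => by rw [map_mul]; ring
    rw [Finset.sum_congr rfl fun j _ => this j, Finset.sum_comm]
    have : ∀ τ : E ≃ₐ[F] E, ∑ j, (a j * τ (b j)) * τ e
        = (if τ = 1 then (1 : E) else 0) * τ e := by
      intro τ; rw [← Finset.sum_mul, key τ]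
    rw [Finset.sum_congr rfl fun τ _ => this τ]
    simp [ite_mul]
  -- the averaging element lies in S
  have hmem : ∀ (c : E) (w : W), (∑ σ : E ≃ₐ[F] E, σ c • ρ σ w) ∈ S := by
    intro c w
    rw [hS]
    intro τ
    rw [map_sum]
    have h1 : ∀ σ : E ≃ₐ[F] E, ρ τ (σ c • ρ σ w) = (τ * σ) c • ρ (τ * σ) w := by
      intro σ
      rw [hρ, map_mul ρ]
      change _ = _ • ((ρ σ).trans (ρ τ)) w
      rw [AddEquiv.trans_apply, AlgEquiv.mul_apply]
    rw [Finset.sum_congr rfl fun σ _ => h1 σ]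
    exact Fintype.sum_equiv (Equiv.mulLeft τ) _ _ fun σ => rfl
  -- fixed vectors are fixed
  have hfix : ∀ (σ : E ≃ₐ[F] E) (s : S), ρ σ (s : W) = (s : W) := fun σ s =>
    (hS s).mp s.2 σ
  constructor
  · -- injectivity: explicit left inverse
    have hretr : ∀ x : E ⊗[F] S,
        (∑ j, a j ⊗ₜ[F] (⟨∑ σ : E ≃ₐ[F] E, σ (b j) • ρ σ (L x), hmem _ _⟩ : S)) = x := by
      intro x
      induction x using TensorProduct.induction_on with
      | zero =>
        have h0 : ∀ j : Fin n,
            (⟨∑ σ : E ≃ₐ[F] E, σ (b j) • ρ σ (L 0), hmem _ _⟩ : S) = 0 :=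
          fun j => Subtype.ext (by simp)
        simp only [h0, TensorProduct.tmul_zero, Finset.sum_const_zero]
      | tmul e s =>
        have h1 : ∀ j : Fin n,
            (⟨∑ σ : E ≃ₐ[F] E, σ (b j) • ρ σ (L (e ⊗ₜ[F] s)), hmem _ _⟩ : S)
              = (Algebra.trace F E (b j * e)) • s := by
          intro j
          apply Subtype.ext
          push_cast
          rw [hL]
          have : ∀ σ : E ≃ₐ[F] E, σ (b j) • ρ σ (e • (s : W)) = σ (b j * e) • (s : W) := by
            intro σ
            rw [hρ, hfix, map_mul, mul_smul]
          rw [Finset.sum_congr rfl fun σ _ => this σ, ← Finset.sum_smul,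
            ← trace_eq_sum_automorphisms, algebraMap_smul]
        rw [Finset.sum_congr rfl fun j _ => by rw [h1 j]]
        calc ∑ j, a j ⊗ₜ[F] ((Algebra.trace F E (b j * e)) • s)
            = ∑ j, ((Algebra.trace F E (b j * e)) • a j) ⊗ₜ[F] s := by
              exact Finset.sum_congr rfl fun j _ => (TensorProduct.smul_tmul _ _ _).symm
          _ = (∑ j, (Algebra.trace F E (b j * e)) • a j) ⊗ₜ[F] s := by
              rw [TensorProduct.sum_tmul]
          _ = e ⊗ₜ[F] s := by rw [hexp]
      | add x y hx hy =>
        have h1 : ∀ j : Fin n,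
            (⟨∑ σ : E ≃ₐ[F] E, σ (b j) • ρ σ (L (x + y)), hmem _ _⟩ : S)
              = (⟨∑ σ : E ≃ₐ[F] E, σ (b j) • ρ σ (L x), hmem _ _⟩ : S)
                + (⟨∑ σ : E ≃ₐ[F] E, σ (b j) • ρ σ (L y), hmem _ _⟩ : S) := by
          intro j
          apply Subtype.ext
          push_cast
          rw [map_add, ← Finset.sum_add_distrib]
          exact Finset.sum_congr rfl fun σ _ => by rw [map_add, smul_add]
        rw [Finset.sum_congr rfl fun j _ => by rw [h1 j]]
        simp only [TensorProduct.tmul_add, Finset.sum_add_distrib, hx, hy]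
    intro x y hxy
    have := hretr x
    rw [hxy, hretr y] at this
    exact this.symm
  · -- surjectivity
    intro w
    refine ⟨∑ j, a j ⊗ₜ[F] (⟨∑ σ : E ≃ₐ[F] E, σ (b j) • ρ σ w, hmem _ _⟩ : S), ?_⟩
    rw [map_sum]
    rw [Finset.sum_congr rfl fun j _ => hL _ _]
    simp only [Submodule.coe_mk]
    calc ∑ j, a j • ∑ σ : E ≃ₐ[F] E, σ (b j) • ρ σ w
        = ∑ j, ∑ σ : E ≃ₐ[F] E, (a j * σ (b j)) • ρ σ w := by
          exact Finset.sum_congr rfl fun j _ => by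
            rw [Finset.smul_sum]
            exact Finset.sum_congr rfl fun σ _ => (mul_smul _ _ _).symm
      _ = ∑ σ : E ≃ₐ[F] E, (∑ j, a j * σ (b j)) • ρ σ w := by
          rw [Finset.sum_comm]
          exact Finset.sum_congr rfl fun σ _ => (Finset.sum_smul).symm
      _ = ∑ σ : E ≃ₐ[F] E, (if σ = 1 then (1 : E) else 0) • ρ σ w := by
          exact Finset.sum_congr rfl fun σ _ => by rw [key σ]
      _ = w := by
          simp [ite_smul, map_one ρ]
          rfl
end

section
/- Let I be a small category, D_• : I → Cat a diagram of categories, and C a category with all I-limits, with a cone of functors F_a : C → D_a over D_•. If each F_a has a right adjoint G_a, then the comparison functor F : C → lim_I D_• has a right adjoint G which, on an object (y_a)_{a∈I} of the limit, is computed as the limit in C of the I-diagram a ↦ G_a(y_a). -/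
open CategoryTheory CategoryTheory.Limits

universe v u u'

noncomputable section AuxLim

variable {I : Type v} [SmallCategory I] (D : I ⥤ Cat.{v, v})

/-- The chosen concrete limit cone in `Cat`. -/
def myLC : LimitCone D := ⟨Cat.HasLimits.limitCone D, Cat.HasLimits.limitConeIsLimit D⟩

theorem eqToHom_sandwich {K : Type*} [Category K] {A X Y Y' Z W V B : K} (p : A = X) (q : X = Y)
    (q' : Y = Y') (x : Y' ⟶ Z) (r : Z = W) (r' : W = V) (s : V = B) (p' : A = Y') (s' : Z = B) :
    eqToHom p ≫ (eqToHom q ≫ (eqToHom q' ≫ x ≫ eqToHom r) ≫ eqToHom r') ≫ eqToHom s =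
      eqToHom p' ≫ x ≫ eqToHom s' := by
  subst p q q' r r' s
  simp

theorem eqToHom_sandwich2 {K : Type*} [Category K] {X X' Y Z W V : K} (p : Y = X) (q : X = X')
    (q' : X' = Y) (x : Y ⟶ Z) (r : Z = W) (s : W = V) (t : V = Z) :
    eqToHom p ≫ (eqToHom q ≫ (eqToHom q' ≫ x ≫ eqToHom r) ≫ eqToHom s) ≫ eqToHom t = x := by
  subst p q r s
  simp

/-- comparison iso -/
def myE : (limit D : Cat.{v,v}) ≅ (Cat.HasLimits.limitCone D).pt :=
  limit.isoLimitCone (myLC D)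

theorem myE_hom_π (a : I) :
    (myE D).hom ≫ (Cat.HasLimits.limitCone D).π.app a = limit.π D a :=
  limit.isoLimitCone_hom_π (myLC D) a

theorem pi_obj_w {a b : I} (f : a ⟶ b) (y : (limit D : Cat.{v,v})) :
    (D.map f).toFunctor.obj ((limit.π D a).toFunctor.obj y) = (limit.π D b).toFunctor.obj y :=
  Functor.congr_obj (congrArg Cat.Hom.toFunctor (limit.w D f)) y

theorem limD_hom_ext {u v : (limit D : Cat.{v,v})} {g h : u ⟶ v}
    (w : ∀ a : I, (limit.π D a).toFunctor.map g = (limit.π D a).toFunctor.map h) : g = h := by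
  have hfaith : (myE D).hom.toFunctor.map g = (myE D).hom.toFunctor.map h → g = h := by
    intro hh
    have h1 := Functor.congr_hom (congrArg Cat.Hom.toFunctor (myE D).hom_inv_id) g
    have h2 := Functor.congr_hom (congrArg Cat.Hom.toFunctor (myE D).hom_inv_id) h
    simp only [Cat.Hom.comp_obj, Cat.Hom.comp_map, Cat.Hom.id_obj, Cat.Hom.id_map] at h1 h2
    rw [hh] at h1
    have h3 := h1.symm.trans h2
    exact (cancel_mono (eqToHom _)).mp ((cancel_epi (eqToHom _)).mp h3)
  apply hfaith
  apply Types.limit_ext.{v,v}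
  intro a
  have h1 := Functor.congr_hom (congrArg Cat.Hom.toFunctor (myE_hom_π D a)) g
  have h2 := Functor.congr_hom (congrArg Cat.Hom.toFunctor (myE_hom_π D a)) h
  simp only [Cat.Hom.comp_obj, Cat.Hom.comp_map] at h1 h2
  have : ((Cat.HasLimits.limitCone D).π.app a).toFunctor.map ((myE D).hom.toFunctor.map g)
      = ((Cat.HasLimits.limitCone D).π.app a).toFunctor.map ((myE D).hom.toFunctor.map h) := by
    rw [h1, h2, w a]
  exact this

noncomputable section AuxLim2

variable {I : Type v} [SmallCategory I] (D : I ⥤ Cat.{v, v})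

theorem myE_obj_π (a : I) (y : (limit D : Cat.{v,v})) :
    ((Cat.HasLimits.limitCone D).π.app a).toFunctor.obj ((myE D).hom.toFunctor.obj y) = (limit.π D a).toFunctor.obj y :=
  Functor.congr_obj (congrArg Cat.Hom.toFunctor (myE_hom_π D a)) y

/-- Build a morphism in `limit D` from a compatible family of morphisms. -/
def limD_hom_mk {u v : (limit D : Cat.{v,v})}
    (g : ∀ a : I, (limit.π D a).toFunctor.obj u ⟶ (limit.π D a).toFunctor.obj v)
    (w : ∀ {a b : I} (f : a ⟶ b),
      (D.map f).toFunctor.map (g a) = eqToHom (pi_obj_w D f u) ≫ g b ≫ eqToHom (pi_obj_w D f v).symm) :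
    u ⟶ v :=
  eqToHom (Functor.congr_obj (congrArg Cat.Hom.toFunctor (myE D).hom_inv_id) u).symm ≫
    (myE D).inv.toFunctor.map
      (Types.Limit.mk.{v,v}
        (Cat.HasLimits.homDiagram ((myE D).hom.toFunctor.obj u) ((myE D).hom.toFunctor.obj v))
        (fun a => eqToHom (myE_obj_π D a u) ≫ g a ≫ eqToHom (myE_obj_π D a v).symm)
        (by
          intro a b f
          show eqToHom _ ≫ (D.map f).toFunctor.map _ ≫ eqToHom _ = _
          erw [Functor.map_comp, Functor.map_comp, eqToHom_map, eqToHom_map, w f]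
          exact eqToHom_sandwich (K := D.obj b) _ _ _ _ _ _ _ _ _)) ≫
    eqToHom (Functor.congr_obj (congrArg Cat.Hom.toFunctor (myE D).hom_inv_id) v)

theorem myE_inv_π (a : I) :
    (myE D).inv ≫ limit.π D a = (Cat.HasLimits.limitCone D).π.app a :=
  limit.isoLimitCone_inv_π (myLC D) a

theorem pi_map_inv {X Y : ((Cat.HasLimits.limitCone D).pt : Cat.{v,v})} (m : X ⟶ Y) (a : I) :
    (limit.π D a).toFunctor.map ((myE D).inv.toFunctor.map m) =
      eqToHom (Functor.congr_obj (congrArg Cat.Hom.toFunctor (myE_inv_π D a)) X) ≫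
        limit.π (Cat.HasLimits.homDiagram X Y) a m ≫
        eqToHom (Functor.congr_obj (congrArg Cat.Hom.toFunctor (myE_inv_π D a)) Y).symm := by
  have h := Functor.congr_hom (congrArg Cat.Hom.toFunctor (myE_inv_π D a)) m
  simp only [Cat.Hom.comp_obj, Cat.Hom.comp_map] at h
  exact h

theorem limD_hom_mk_π {u v : (limit D : Cat.{v,v})}
    (g : ∀ a : I, (limit.π D a).toFunctor.obj u ⟶ (limit.π D a).toFunctor.obj v)
    (w : ∀ {a b : I} (f : a ⟶ b),
      (D.map f).toFunctor.map (g a) = eqToHom (pi_obj_w D f u) ≫ g b ≫ eqToHom (pi_obj_w D f v).symm)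
    (a : I) : (limit.π D a).toFunctor.map (limD_hom_mk D g w) = g a := by
  dsimp only [limD_hom_mk]
  rw [Functor.map_comp, Functor.map_comp, eqToHom_map, eqToHom_map]
  erw [pi_map_inv, Types.Limit.π_mk.{v,v}]
  exact eqToHom_sandwich2 (K := D.obj a) _ _ _ _ _ _ _

end AuxLim2
noncomputable section AuxDia

variable {I : Type v} [SmallCategory I] (D : I ⥤ Cat.{v, v})
  {C : Type u} [Category.{u'} C]
  (F : ∀ a : I, C ⥤ D.obj a)
  (hF : ∀ (a b : I) (f : a ⟶ b), F a ⋙ (D.map f).toFunctor = F b)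
  (G : ∀ a : I, D.obj a ⥤ C)
  (adj : ∀ a : I, F a ⊣ G a)

theorem pi_obj_w' {a b : I} (f : a ⟶ b) (y : (limit D : Cat.{v,v})) :
    (D.map f).toFunctor.obj ((limit.π D a).toFunctor.obj y) = (limit.π D b).toFunctor.obj y :=
  Functor.congr_obj (congrArg Cat.Hom.toFunctor (limit.w D f)) y

include hF

theorem hFobj {a b : I} (f : a ⟶ b) (X : C) :
    (D.map f).toFunctor.obj ((F a).obj X) = (F b).obj X :=
  Functor.congr_obj (hF a b f) X

/-- The transposed structure map. -/
def tau {a b : I} (f : a ⟶ b) (y : (limit D : Cat.{v,v})) :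
    (F b).obj ((G a).obj ((limit.π D a).toFunctor.obj y)) ⟶ (limit.π D b).toFunctor.obj y :=
  eqToHom (hFobj D F hF f _).symm ≫
    (D.map f).toFunctor.map ((adj a).counit.app ((limit.π D a).toFunctor.obj y)) ≫
    eqToHom (pi_obj_w' D f y)

/-- The `I`-diagram in `C` whose value at `a` is `G_a (y_a)`. -/
@[reducible]
def dia (y : (limit D : Cat.{v,v})) : I ⥤ C where
  obj a := (G a).obj ((limit.π D a).toFunctor.obj y)
  map {a b} f := ((adj b).homEquiv _ _) (tau D F hF G adj f y)
  map_id a := by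
    have h : tau D F hF G adj (𝟙 a) y = (adj a).counit.app ((limit.π D a).toFunctor.obj y) := by
      dsimp only [tau]
      rw [Functor.congr_hom (congrArg Cat.Hom.toFunctor (D.map_id a)) ((adj a).counit.app ((limit.π D a).toFunctor.obj y))]
      simp
    rw [h, Equiv.apply_eq_iff_eq_symm_apply, Adjunction.homEquiv_counit]
    simp
  map_comp {a b c} f g := by
    rw [← Adjunction.homEquiv_naturality_left]
    refine congrArg _ ?_
    dsimp only [tau]
    rw [Functor.congr_hom (congrArg Cat.Hom.toFunctor (D.map_comp f g)) ((adj a).counit.app ((limit.π D a).toFunctor.obj y))]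
    rw [Functor.congr_hom (hF b c g).symm]
    simp only [Functor.comp_map, Category.assoc, eqToHom_trans, eqToHom_trans_assoc,
      eqToHom_refl, Category.id_comp, Category.comp_id]
    have hc := ((adj b).homEquiv _ _).symm_apply_apply (tau D F hF G adj f y)
    rw [Adjunction.homEquiv_counit] at hc
    dsimp only [tau] at hc
    rw [← Functor.map_comp_assoc, hc]
    simp [eqToHom_map, Cat.Hom.comp_map]

end AuxDia

noncomputable section AuxAdj

variable {I : Type v} [SmallCategory I] {D : I ⥤ Cat.{v, v}}
  {C : Type u} [Category.{u'} C]

theorem hPhiObj {F : ∀ a : I, C ⥤ D.obj a} {Φ : C ⥤ (limit D : Cat.{v, v})}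
    (hΦ : ∀ a : I, Φ ⋙ ((limit.π D a).toFunctor : (limit D : Cat.{v, v}) ⥤ D.obj a) = F a)
    (a : I) (x : C) : (limit.π D a).toFunctor.obj (Φ.obj x) = (F a).obj x :=
  Functor.congr_obj (hΦ a) x

theorem dia_map {F : ∀ a : I, C ⥤ D.obj a}
    (hF : ∀ (a b : I) (f : a ⟶ b), F a ⋙ (D.map f).toFunctor = F b)
    {G : ∀ a : I, D.obj a ⥤ C} (adj : ∀ a : I, F a ⊣ G a)
    (y : (limit D : Cat.{v,v})) {a b : I} (f : a ⟶ b) :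
    (dia D F hF G adj y).map f = ((adj b).homEquiv _ _) (tau D F hF G adj f y) := rfl

variable {F : ∀ a : I, C ⥤ D.obj a}
  (hF : ∀ (a b : I) (f : a ⟶ b), F a ⋙ (D.map f).toFunctor = F b)
  {G : ∀ a : I, D.obj a ⥤ C}
  (adj : ∀ a : I, F a ⊣ G a)
  {Φ : C ⥤ (limit D : Cat.{v, v})}
  (hΦ : ∀ a : I, Φ ⋙ ((limit.π D a).toFunctor : (limit D : Cat.{v, v}) ⥤ D.obj a) = F a)

/-- The cone on `dia` induced by a morphism `Φ x ⟶ y`. -/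
@[reducible]
def coneOf (x : C) (y : (limit D : Cat.{v,v})) (g : Φ.obj x ⟶ y) :
    Cone (dia D F hF G adj y) where
  pt := x
  π :=
    { app := fun a => ((adj a).homEquiv _ _)
        (eqToHom (hPhiObj hΦ a x).symm ≫ (limit.π D a).toFunctor.map g)
      naturality := fun a b f => by
        simp only [Functor.const_obj_obj, Functor.const_obj_map, Category.id_comp]
        refine Eq.trans (congrArg ((adj b).homEquiv _ _) ?_)
          (Adjunction.homEquiv_naturality_left (adj b) _ _)
        symm
        dsimp only [tau]
        rw [Functor.congr_hom (hF a b f).symm]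
        have hc := ((adj a).homEquiv _ _).symm_apply_apply
          (eqToHom (hPhiObj hΦ a x).symm ≫ (limit.π D a).toFunctor.map g)
        rw [Adjunction.homEquiv_counit] at hc
        rw [Functor.comp_map]
        simp only [Category.assoc, Functor.comp_obj, eqToHom_trans, eqToHom_trans_assoc,
          eqToHom_refl, Category.id_comp]
        rw [← Functor.map_comp_assoc, hc, Functor.map_comp, eqToHom_map,
          Functor.congr_hom (congrArg Cat.Hom.toFunctor (limit.w D f)).symm g]
        simp [Cat.Hom.comp_map] }

theorem coneOf_π (x : C) (y : (limit D : Cat.{v,v})) (g : Φ.obj x ⟶ y) (a : I) :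
    (coneOf hF adj hΦ x y g).π.app a = ((adj a).homEquiv _ _)
        (eqToHom (hPhiObj hΦ a x).symm ≫ (limit.π D a).toFunctor.map g) := rfl

variable [HasLimitsOfShape I C]

theorem invBar_compat (x : C) (y : (limit D : Cat.{v,v}))
    (h : x ⟶ limit (dia D F hF G adj y)) :
    ∀ {a b : I} (f : a ⟶ b),
      (D.map f).toFunctor.map ((fun a => eqToHom (hPhiObj hΦ a x) ≫
          ((adj a).homEquiv _ _).symm (h ≫ limit.π (dia D F hF G adj y) a)) a) =
        eqToHom (pi_obj_w D f (Φ.obj x)) ≫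
          (fun a => eqToHom (hPhiObj hΦ a x) ≫
            ((adj a).homEquiv _ _).symm (h ≫ limit.π (dia D F hF G adj y) a)) b ≫
          eqToHom (pi_obj_w D f y).symm := by
      intro a b f
      dsimp only
      rw [← limit.w (dia D F hF G adj y) f]
      rw [Adjunction.homEquiv_counit, Adjunction.homEquiv_counit]
      have hc := ((adj b).homEquiv ((G a).obj ((limit.π D a).toFunctor.obj y))
        ((limit.π D b).toFunctor.obj y)).symm_apply_apply (tau D F hF G adj f y)
      rw [Adjunction.homEquiv_counit] at hc
      rw [dia_map hF adj]
      simp only [Functor.map_comp, Category.assoc]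
      rw [reassoc_of% hc]
      rw [Functor.congr_hom (hF a b f).symm h]
      rw [Functor.congr_hom (hF a b f).symm (limit.π (dia D F hF G adj y) a)]
      dsimp only [tau]
      simp [eqToHom_map, Functor.comp_map]

/-- The backward map of the hom equivalence. -/
def invBar (x : C) (y : (limit D : Cat.{v,v})) (h : x ⟶ limit (dia D F hF G adj y)) :
    Φ.obj x ⟶ y :=
  limD_hom_mk D
    (fun a => eqToHom (hPhiObj hΦ a x) ≫
      ((adj a).homEquiv _ _).symm (h ≫ limit.π (dia D F hF G adj y) a))
    (invBar_compat hF adj hΦ x y h)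

theorem invBar_π (x : C) (y : (limit D : Cat.{v,v})) (h : x ⟶ limit (dia D F hF G adj y))
    (a : I) : (limit.π D a).toFunctor.map (invBar hF adj hΦ x y h) =
      eqToHom (hPhiObj hΦ a x) ≫
        ((adj a).homEquiv _ _).symm (h ≫ limit.π (dia D F hF G adj y) a) :=
  limD_hom_mk_π D _ (invBar_compat hF adj hΦ x y h) a

/-- The hom equivalence. -/
def homEquivBar (x : C) (y : (limit D : Cat.{v,v})) :
    (Φ.obj x ⟶ y) ≃ (x ⟶ limit (dia D F hF G adj y)) where
  toFun g := limit.lift _ (coneOf hF adj hΦ x y g)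
  invFun h := invBar hF adj hΦ x y h
  left_inv g := by
    show invBar hF adj hΦ x y (limit.lift _ (coneOf hF adj hΦ x y g)) = g
    apply limD_hom_ext D
    intro a
    rw [invBar_π, limit.lift_π, coneOf_π, Equiv.symm_apply_apply]
    simp
  right_inv h := by
    show limit.lift _ (coneOf hF adj hΦ x y (invBar hF adj hΦ x y h)) = h
    apply limit.hom_ext
    intro a
    rw [limit.lift_π, coneOf_π, invBar_π]
    simp

theorem homEquivBar_nat (x' x : C) (y : (limit D : Cat.{v,v})) (s : x' ⟶ x)
    (g : Φ.obj x ⟶ y) :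
    homEquivBar hF adj hΦ x' y (Φ.map s ≫ g) = s ≫ homEquivBar hF adj hΦ x y g := by
  apply limit.hom_ext
  intro a
  simp only [homEquivBar, Equiv.coe_fn_mk]
  rw [limit.lift_π, Category.assoc, limit.lift_π, coneOf_π, coneOf_π]
  refine Eq.trans (congrArg ((adj a).homEquiv _ _) ?_)
    (Adjunction.homEquiv_naturality_left (adj a) _ _)
  rw [Functor.map_comp]
  have hs := Functor.congr_hom (hΦ a) s
  simp only [Functor.comp_map] at hs
  rw [hs]
  simp

end AuxAdj

/-- Adjoint descent: given a cone of functors `F_a : C ⥤ D_a` over a diagram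
`D : I ⥤ Cat`, if each `F_a` has a right adjoint `G_a` and `C` has `I`-limits,
then the comparison functor `Φ : C ⥤ lim D` has a right adjoint `Ḡ` which, on an
object `y = (y_a)` of the limit, is computed as the limit in `C` of an `I`-diagram
whose value at `a` is `G_a (y_a)`. -/
theorem adjoint_descent
    {I : Type v} [SmallCategory I] (D : I ⥤ Cat.{v, v})
    {C : Type u} [Category.{u'} C] [HasLimitsOfShape I C]
    (F : ∀ a : I, C ⥤ D.obj a)
    (hF : ∀ (a b : I) (f : a ⟶ b), F a ⋙ (D.map f).toFunctor = F b)
    (G : ∀ a : I, D.obj a ⥤ C)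
    (adj : ∀ a : I, F a ⊣ G a)
    (Φ : C ⥤ (limit D : Cat.{v, v}))
    (hΦ : ∀ a : I, Φ ⋙ ((limit.π D a).toFunctor : (limit D : Cat.{v, v}) ⥤ D.obj a) = F a) :
    ∃ Gbar : (limit D : Cat.{v, v}) ⥤ C,
      Nonempty (Φ ⊣ Gbar) ∧
      ∀ y : (limit D : Cat.{v, v}), ∃ d : I ⥤ C,
        (∀ a : I, d.obj a = (G a).obj ((limit.π D a).toFunctor.obj y)) ∧
        ∃ c : Cone d, c.pt = Gbar.obj y ∧ Nonempty (IsLimit c) := by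
  refine ⟨Adjunction.rightAdjointOfEquiv
      (G_obj := fun y => limit (dia D F hF G adj y))
      (fun x y => homEquivBar hF adj hΦ x y)
      (fun x' x y s g => homEquivBar_nat hF adj hΦ x' x y s g),
    ⟨Adjunction.adjunctionOfEquivRight _ _⟩,
    fun y => ⟨dia D F hF G adj y, fun a => rfl,
      ⟨limit.cone _, rfl, ⟨limit.isLimit _⟩⟩⟩⟩
end AuxLim
end
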